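/- Let q > 1/2 and set θ = arcsin(q/(q+1)) ∈ (0, π/2). Suppose α, β ∈ ℝ satisfy −(1+αβ) < |α−β| · √(2q+1)/q. Then there exist λ ∈ [0,1] and ε ∈ (0,1) such that 2(1−ε)√(λ(1−λ)) + cos θ − |λβ − (1−λ)α| sin θ > 0. -/

import Mathlib

private lemma abs_facts (α β : ℝ) (hab : α * β < 0) (lam : ℝ)
    (h0 : 0 ≤ lam) (h1 : lam ≤ 1) :
    |α - β| = |α| + |β| ∧ |lam * β - (1 - lam) * α| = lam * |β| + (1 - lam) * |α| := by
  rcases lt_trichotomy α 0 with hα | hα | hα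
  · have hβ : 0 < β := by nlinarith
    have h2 : (0:ℝ) ≤ lam * β := mul_nonneg h0 hβ.le
    have h3 : (0:ℝ) ≤ (1 - lam) * (-α) := mul_nonneg (by linarith) (by linarith)
    have h4 : 0 ≤ lam * β - (1 - lam) * α := by nlinarith
    rw [abs_of_neg hα, abs_of_pos hβ, abs_of_neg (show α - β < 0 by linarith),
      abs_of_nonneg h4]
    constructor <;> ring
  · exfalso; rw [hα] at hab; simp at hab
  · have hβ : β < 0 := by nlinarith
    have h2 : (0:ℝ) ≤ lam * (-β) := mul_nonneg h0 (by linarith)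
    have h3 : (0:ℝ) ≤ (1 - lam) * α := mul_nonneg (by linarith) hα.le
    have h4 : lam * β - (1 - lam) * α ≤ 0 := by nlinarith
    rw [abs_of_pos hα, abs_of_neg hβ, abs_of_pos (show 0 < α - β by linarith),
      abs_of_nonpos h4]
    constructor <;> ring

private lemma final_ineq (q K a b r : ℝ) (hq0 : 0 < q)
    (hK2 : K ^ 2 = 2 * q + 1)
    (habq : a * b * q < q + (a + b) * K) (hr1 : 1 ≤ r)
    (hr2 : r ^ 2 = 1 + ((b - a) * q / (2 * (q + 1))) ^ 2) :
    0 < r + K / (q + 1) - (a + b) * q / (2 * (q + 1)) := by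
  have hq1 : (0:ℝ) < q + 1 := by linarith
  rcases le_or_gt ((a + b) * q / (2 * (q + 1))) (K / (q + 1)) with hle | hgt
  · linarith
  · have hsq : ((a + b) * q / (2 * (q + 1)) - K / (q + 1)) ^ 2 < r ^ 2 := by
      rw [hr2,
        show (a + b) * q / (2 * (q + 1)) - K / (q + 1)
          = ((a + b) * q - 2 * K) / (2 * (q + 1)) by field_simp,
        div_pow, div_pow, div_lt_iff₀ (by positivity : (0:ℝ) < (2 * (q + 1)) ^ 2)]
      rw [show (1 + ((b - a) * q) ^ 2 / (2 * (q + 1)) ^ 2) * (2 * (q + 1)) ^ 2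
          = (2 * (q + 1)) ^ 2 + ((b - a) * q) ^ 2 by field_simp]
      nlinarith [mul_pos hq0 (show 0 < q + (a + b) * K - a * b * q by linarith), hK2]
    have := lt_of_pow_lt_pow_left₀ 2 (by linarith : (0:ℝ) ≤ r) hsq
    linarith

private lemma key_lemma (q α β : ℝ) (hq : 1 / 2 < q)
    (h : -(1 + α * β) < |α - β| * Real.sqrt (2 * q + 1) / q) :
    ∃ lam : ℝ, lam ∈ Set.Icc (0 : ℝ) 1 ∧
      0 < 2 * Real.sqrt (lam * (1 - lam)) + Real.sqrt (2 * q + 1) / (q + 1) -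
        |lam * β - (1 - lam) * α| * (q / (q + 1)) := by
  have hq0 : 0 < q := by linarith
  have hq1 : 0 < q + 1 := by linarith
  have hK0 : 0 < Real.sqrt (2 * q + 1) := Real.sqrt_pos.mpr (by linarith)
  set K := Real.sqrt (2 * q + 1) with hKdef
  have hK2 : K ^ 2 = 2 * q + 1 := Real.sq_sqrt (by linarith)
  clear_value K
  have hc0 : 0 < K / (q + 1) := by positivity
  rcases le_or_gt 0 (α * β) with hab | hab
  · by_cases hs : α + β = 0
    · have hα : α = 0 := by nlinarith
      refine ⟨0, ⟨le_refl 0, zero_le_one⟩, ?_⟩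
      simp [hα]
      positivity
    · refine ⟨α / (α + β), ⟨?_, ?_⟩, ?_⟩
      · rcases lt_or_gt_of_ne hs with hneg | hpos
        · have hα : α ≤ 0 := by nlinarith
          exact div_nonneg_iff.mpr (Or.inr ⟨hα, hneg.le⟩)
        · have hα : 0 ≤ α := by nlinarith
          exact div_nonneg hα hpos.le
      · rcases lt_or_gt_of_ne hs with hneg | hpos
        · have hβ : β ≤ 0 := by nlinarith
          rw [div_le_one_iff]
          right; right; exact ⟨hneg, by linarith⟩
        · have hβ : 0 ≤ β := by nlinarith
          rw [div_le_one hpos]; linarith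
      · have hzero : α / (α + β) * β - (1 - α / (α + β)) * α = 0 := by
          field_simp
          ring
        rw [hzero, abs_zero]
        have := Real.sqrt_nonneg (α / (α + β) * (1 - α / (α + β)))
        nlinarith
  · -- main case: α β < 0
    set a := |α| with hadef
    set b := |β| with hbdef
    clear_value a b
    have ha0 : 0 ≤ a := hadef ▸ abs_nonneg α
    have hb0 : 0 ≤ b := hbdef ▸ abs_nonneg β
    have hprod : a * b = -(α * β) := by
      rw [hadef, hbdef, ← abs_mul, abs_of_neg hab]
    set m := (b - a) * q / (2 * (q + 1)) with hmdef
    clear_value m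
    set r := Real.sqrt (1 + m ^ 2) with hrdef
    have hr2 : r ^ 2 = 1 + m ^ 2 := Real.sq_sqrt (by positivity)
    have hrn : 0 ≤ r := Real.sqrt_nonneg _
    clear_value r
    have hr1 : 1 ≤ r := by nlinarith [sq_nonneg m]
    have hr0 : 0 < r := by linarith
    have hmr1 : m < r := by nlinarith
    have hmr2 : -r < m := by nlinarith
    set lam := (1 - m / r) / 2 with hlamdef
    clear_value lam
    have hmdiv1 : m / r < 1 := (div_lt_one hr0).mpr hmr1
    have hmdiv2 : -1 < m / r := by rw [lt_div_iff₀ hr0]; linarith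
    have hlam0 : 0 ≤ lam := by rw [hlamdef]; linarith
    have hlam1 : lam ≤ 1 := by rw [hlamdef]; linarith
    obtain ⟨hsub, habs⟩ := abs_facts α β hab lam hlam0 hlam1
    rw [← hadef, ← hbdef] at hsub habs
    have hmain : a * b - 1 < (a + b) * K / q := by
      rw [hsub] at h; linarith [hprod]
    have habq : a * b * q < q + (a + b) * K := by
      have h2 := mul_lt_mul_of_pos_right hmain hq0
      rw [div_mul_cancel₀ _ (ne_of_gt hq0)] at h2
      linarith
    have hlp : lam * (1 - lam) = (r ^ 2 - m ^ 2) / (2 * r) ^ 2 := by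
      rw [hlamdef]; field_simp; ring
    have hsqrt : Real.sqrt (lam * (1 - lam)) = 1 / (2 * r) := by
      rw [hlp, show r ^ 2 - m ^ 2 = 1 by linarith,
        show (1 : ℝ) / (2 * r) ^ 2 = (1 / (2 * r)) ^ 2 by rw [div_pow, one_pow]]
      exact Real.sqrt_sq (le_of_lt (div_pos one_pos (by linarith)))
    refine ⟨lam, ⟨hlam0, hlam1⟩, ?_⟩
    rw [habs, hsqrt]
    have hval : (lam * b + (1 - lam) * a) * (q / (q + 1)) =
        (a + b) * q / (2 * (q + 1)) - m ^ 2 / r := by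
      rw [hlamdef, hmdef]; field_simp; ring
    rw [hval]
    have hrr : 2 * (1 / (2 * r)) + m ^ 2 / r = r := by
      field_simp
      linarith [hr2]
    have key : 0 < r + K / (q + 1) - (a + b) * q / (2 * (q + 1)) :=
      final_ineq q K a b r hq0 hK2 habq hr1 (by rw [← hmdef]; exact hr2)
    linarith

/-- Elementary optimization claim: if `q > 1/2`, `θ = arcsin(q/(q+1))` and
`−(1+αβ) < |α−β|·√(2q+1)/q`, then there exist `λ ∈ [0,1]` and `ε ∈ (0,1)` with
`2(1−ε)√(λ(1−λ)) + cos θ − |λβ − (1−λ)α| sin θ > 0`. -/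
theorem cross_term_optimization (q α β : ℝ) (hq : 1 / 2 < q)
    (h : -(1 + α * β) < |α - β| * Real.sqrt (2 * q + 1) / q) :
    ∃ lam : ℝ, lam ∈ Set.Icc (0 : ℝ) 1 ∧ ∃ ε : ℝ, ε ∈ Set.Ioo (0 : ℝ) 1 ∧
      0 < 2 * (1 - ε) * Real.sqrt (lam * (1 - lam)) +
        Real.cos (Real.arcsin (q / (q + 1))) -
        |lam * β - (1 - lam) * α| * Real.sin (Real.arcsin (q / (q + 1))) := by
  have hq1 : (0:ℝ) < q + 1 := by linarith
  have hx1 : q / (q + 1) ≤ 1 := by rw [div_le_one hq1]; linarith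
  have hx0 : (0:ℝ) ≤ q / (q + 1) := by positivity
  have hsin : Real.sin (Real.arcsin (q / (q + 1))) = q / (q + 1) :=
    Real.sin_arcsin (by linarith) hx1
  have hcos : Real.cos (Real.arcsin (q / (q + 1))) = Real.sqrt (2 * q + 1) / (q + 1) := by
    rw [Real.cos_arcsin,
      show 1 - (q / (q + 1)) ^ 2 = (2 * q + 1) / (q + 1) ^ 2 by field_simp; ring,
      Real.sqrt_div (by linarith), Real.sqrt_sq hq1.le]
  obtain ⟨lam, hlam, hpos⟩ := key_lemma q α β hq h
  set E := 2 * Real.sqrt (lam * (1 - lam)) + Real.sqrt (2 * q + 1) / (q + 1) -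
    |lam * β - (1 - lam) * α| * (q / (q + 1)) with hE
  clear_value E
  refine ⟨lam, hlam, min (1/2) (E/4),
    ⟨lt_min (by norm_num) (by linarith), lt_of_le_of_lt (min_le_left _ _) (by norm_num)⟩, ?_⟩
  rw [hsin, hcos]
  have hS1 : Real.sqrt (lam * (1 - lam)) ≤ 1 / 2 := by
    rw [show (1:ℝ)/2 = Real.sqrt ((1/2)^2) by rw [Real.sqrt_sq]; norm_num]
    exact Real.sqrt_le_sqrt (by nlinarith [sq_nonneg (lam - 1/2)])
  have hS0 : 0 ≤ Real.sqrt (lam * (1 - lam)) := Real.sqrt_nonneg _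
  have hεE : min (1/2) (E/4) ≤ E / 4 := min_le_right _ _
  have hmul : min (1/2) (E/4) * Real.sqrt (lam * (1 - lam)) ≤ (E/4) * (1/2) :=
    mul_le_mul hεE hS1 hS0 (by linarith)
  nlinarith [hpos, hmul]
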